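/- Let d ≥ 1 be an integer, 1 < p < ∞, 1 < q < ∞ with conjugate exponent q′ = q/(q−1), 0 < s < 1, and M > 0. Let h ∈ L^q(−M,M) and define φ(t) := ∫_0^t h(r) dr for t ∈ [−M,M]. Let ξ : ℝ^d → [−M,M] be measurable. Then, as integrals with values in [0,∞], ∫_{ℝ^d}∫_{ℝ^d} |φ(ξ(x)) − φ(ξ(y))|^p / |x−y|^{d+sp} dy dx ≤ ‖h‖_{L^q(−M,M)}^p · ∫_{ℝ^d}∫_{ℝ^d} |ξ(x)−ξ(y)|^{p/q′} / |x−y|^{d+sp} dy dx. -/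

import Mathlib

open MeasureTheory

/-- **Composition estimate** from the proof of Theorem 1.1: if `φ(t) = ∫_0^t h`
with `h ∈ L^q(−M,M)` and `ξ : ℝ^d → [−M,M]` is measurable, then the
`s`-Gagliardo energy of `φ∘ξ` is controlled by
`‖h‖_{L^q(−M,M)}^p · ∫∫ |ξ(x)−ξ(y)|^(p/q′) / |x−y|^(d+sp)`, where
`q′ = q/(q−1)` is the conjugate exponent. -/
theorem stmt12 (d : ℕ) (hd : 1 ≤ d) (p q q' s M : ℝ)
    (hp : 1 < p) (hq : 1 < q) (hq' : q' = q / (q - 1))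
    (hs : s ∈ Set.Ioo (0 : ℝ) 1) (hM : 0 < M)
    (h : ℝ → ℝ) (hh : MemLp h (ENNReal.ofReal q) (volume.restrict (Set.Icc (-M) M)))
    (ξ : EuclideanSpace ℝ (Fin d) → ℝ) (hξ : Measurable ξ)
    (hξM : ∀ x, ξ x ∈ Set.Icc (-M) M) :
    (∫⁻ x, ∫⁻ y, ENNReal.ofReal
        (|(∫ r in (0 : ℝ)..(ξ x), h r) - ∫ r in (0 : ℝ)..(ξ y), h r| ^ p /
          ‖x - y‖ ^ ((d : ℝ) + s * p)))
      ≤ ENNReal.ofReal ((((∫ r in Set.Icc (-M) M, |h r| ^ q)) ^ (1 / q)) ^ p) *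
          ∫⁻ x, ∫⁻ y, ENNReal.ofReal
            (|ξ x - ξ y| ^ (p / q') / ‖x - y‖ ^ ((d : ℝ) + s * p)) := by
  set C : ℝ := (∫ r in Set.Icc (-M) M, |h r| ^ q) ^ (1 / q) with hC
  have hq0 : 0 < q := lt_trans one_pos hq
  have hconj : q.HolderConjugate q' :=
    (Real.holderConjugate_iff_eq_conjExponent hq).mpr hq'
  have hq'0 : 0 < q' := hconj.symm.pos
  have hCnn : 0 ≤ C := Real.rpow_nonneg
    (setIntegral_nonneg measurableSet_Icc fun r _ => Real.rpow_nonneg (abs_nonneg _) _) _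
  have hCpnn : 0 ≤ C ^ p := Real.rpow_nonneg hCnn _
  haveI : IsFiniteMeasure (volume.restrict (Set.Icc (-M) M)) :=
    ⟨by rw [Measure.restrict_apply_univ]; exact measure_Icc_lt_top⟩
  have hIcc : IntegrableOn h (Set.Icc (-M) M) :=
    hh.integrable (ENNReal.one_le_ofReal.mpr hq.le)
  have h0M : (0 : ℝ) ∈ Set.Icc (-M) M := ⟨by linarith, hM.le⟩
  have hIIq : IntegrableOn (fun r => |h r| ^ q) (Set.Icc (-M) M) := by
    have := hh.integrable_norm_rpow (by simpa [ENNReal.ofReal_eq_zero] using hq0)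
      ENNReal.ofReal_ne_top
    simpa [ENNReal.toReal_ofReal hq0.le, Real.norm_eq_abs, IntegrableOn] using this
  -- key pointwise estimate
  have key : ∀ a ∈ Set.Icc (-M) M, ∀ b ∈ Set.Icc (-M) M,
      |∫ r in b..a, h r| ≤ C * |a - b| ^ (1 / q') := by
    intro a ha b hb
    have hsubI : Set.uIoc b a ⊆ Set.Icc (-M) M :=
      Set.uIoc_subset_uIcc.trans (Set.uIcc_subset_Icc hb ha)
    set μ' := volume.restrict (Set.uIoc b a) with hμ'
    haveI : IsFiniteMeasure μ' :=
      ⟨by rw [Measure.restrict_apply_univ]; exact measure_Ioc_lt_top⟩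
    have hle : μ' ≤ volume.restrict (Set.Icc (-M) M) :=
      Measure.restrict_mono hsubI le_rfl
    have hf : MemLp (fun r => |h r|) (ENNReal.ofReal q) μ' := by
      have := (hh.norm).mono_measure hle
      simpa [Real.norm_eq_abs] using this
    have hg : MemLp (fun _ : ℝ => (1 : ℝ)) (ENNReal.ofReal q') μ' := memLp_const 1
    have hH := integral_mul_le_Lp_mul_Lq_of_nonneg hconj
      (Filter.Eventually.of_forall fun r => abs_nonneg (h r))
      (Filter.Eventually.of_forall fun _ => zero_le_one) hf hg
    simp only [mul_one, Real.one_rpow] at hH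
    have hvol : ∫ _ : ℝ, (1 : ℝ) ∂μ' = |a - b| := by
      rw [integral_const, measureReal_def, Measure.restrict_apply_univ, smul_eq_mul, mul_one]
      rw [Set.uIoc, Real.volume_Ioc, ENNReal.toReal_ofReal (by simp [le_max_iff, min_le_iff, le_total]),
        max_sub_min_eq_abs, abs_sub_comm]
    rw [hvol] at hH
    have hmono : ∫ r, |h r| ^ q ∂μ' ≤ ∫ r in Set.Icc (-M) M, |h r| ^ q :=
      setIntegral_mono_set hIIq
        (Filter.Eventually.of_forall fun r => Real.rpow_nonneg (abs_nonneg _) _)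
        (HasSubset.Subset.eventuallyLE hsubI)
    calc |∫ r in b..a, h r| ≤ ∫ r in Set.uIoc b a, ‖h r‖ :=
          by simpa [Real.norm_eq_abs] using
            intervalIntegral.norm_integral_le_integral_norm_uIoc
              (a := b) (b := a) (f := h) (μ := volume)
      _ = ∫ r, |h r| ∂μ' := by simp [Real.norm_eq_abs, hμ']
      _ ≤ (∫ r, |h r| ^ q ∂μ') ^ (1 / q) * |a - b| ^ (1 / q') := hH
      _ ≤ C * |a - b| ^ (1 / q') := by
          apply mul_le_mul_of_nonneg_right _ (Real.rpow_nonneg (abs_nonneg _) _)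
          exact Real.rpow_le_rpow (integral_nonneg fun r => Real.rpow_nonneg (abs_nonneg _) _)
            hmono (by positivity)
  -- pointwise bound of the integrand
  have hpt : ∀ x y : EuclideanSpace ℝ (Fin d),
      ENNReal.ofReal
        (|(∫ r in (0 : ℝ)..(ξ x), h r) - ∫ r in (0 : ℝ)..(ξ y), h r| ^ p /
          ‖x - y‖ ^ ((d : ℝ) + s * p))
      ≤ ENNReal.ofReal (C ^ p) *
        ENNReal.ofReal (|ξ x - ξ y| ^ (p / q') / ‖x - y‖ ^ ((d : ℝ) + s * p)) := by
    intro x y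
    have hII : ∀ a ∈ Set.Icc (-M) M, IntervalIntegrable h volume 0 a := fun a ha =>
      (hIcc.mono_set (Set.uIcc_subset_Icc h0M ha)).intervalIntegrable
    have hdiff : (∫ r in (0 : ℝ)..(ξ x), h r) - ∫ r in (0 : ℝ)..(ξ y), h r
        = ∫ r in (ξ y)..(ξ x), h r :=
      intervalIntegral.integral_interval_sub_left (hII _ (hξM x)) (hII _ (hξM y))
    have hbound : |(∫ r in (0 : ℝ)..(ξ x), h r) - ∫ r in (0 : ℝ)..(ξ y), h r| ^ p
        ≤ C ^ p * |ξ x - ξ y| ^ (p / q') := by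
      rw [hdiff]
      calc |∫ r in (ξ y)..(ξ x), h r| ^ p
          ≤ (C * |ξ x - ξ y| ^ (1 / q')) ^ p :=
            Real.rpow_le_rpow (abs_nonneg _) (key _ (hξM x) _ (hξM y)) (by linarith)
        _ = C ^ p * |ξ x - ξ y| ^ (p / q') := by
            rw [Real.mul_rpow hCnn (Real.rpow_nonneg (abs_nonneg _) _),
              ← Real.rpow_mul (abs_nonneg _), one_div_mul_eq_div]
    rw [← ENNReal.ofReal_mul hCpnn]
    apply ENNReal.ofReal_le_ofReal
    rw [div_eq_mul_inv, ← mul_div_assoc, div_eq_mul_inv]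
    exact mul_le_mul_of_nonneg_right hbound
      (inv_nonneg.mpr (Real.rpow_nonneg (norm_nonneg _) _))
  calc (∫⁻ x, ∫⁻ y, ENNReal.ofReal
        (|(∫ r in (0 : ℝ)..(ξ x), h r) - ∫ r in (0 : ℝ)..(ξ y), h r| ^ p /
          ‖x - y‖ ^ ((d : ℝ) + s * p)))
      ≤ ∫⁻ x, ∫⁻ y, ENNReal.ofReal (C ^ p) *
          ENNReal.ofReal (|ξ x - ξ y| ^ (p / q') / ‖x - y‖ ^ ((d : ℝ) + s * p)) :=
        lintegral_mono fun x => lintegral_mono fun y => hpt x y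
    _ = ENNReal.ofReal (C ^ p) * ∫⁻ x, ∫⁻ y, ENNReal.ofReal
          (|ξ x - ξ y| ^ (p / q') / ‖x - y‖ ^ ((d : ℝ) + s * p)) := by
        simp_rw [lintegral_const_mul' _ _ ENNReal.ofReal_ne_top]
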